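/- arXiv:1510.05535 — 2 statements merged into one kernel-verified Lean document; each statement's English description precedes it below -/
import Mathlib

section
/- If A and B are push-invariant moulds in ARI, then swap(ari(swap(A), swap(B))) = ari(A,B), where the inner ari is the Lie bracket on v-moulds and the outer equality is in u-moulds. -/
open List

variable {K : Type*} [Field K] [CharZero K]

/-- The multiset (as a list, with multiplicity) of shuffles of two words. -/
def shuffles {α : Type*} : List α → List α → List (List α)
  | [], v => [v]
  | u, [] => [u]
  | x :: u, y :: v =>
      ((shuffles u (y :: v)).map (x :: ·)) ++ ((shuffles (x :: u) v).map (y :: ·))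
  termination_by u v => u.length + v.length

/-- A mould (at the level of evaluations) is alternal if all its shuffle sums over
pairs of nonempty words vanish. -/
def Alternal (A : List K → K) : Prop :=
  ∀ u v : List K, u ≠ [] → v ≠ [] → ((shuffles u v).map A).sum = 0

/-- mould multiplication `mu`. -/
def mu (A B : List K → K) : List K → K :=
  fun w => ∑ k ∈ Finset.range (w.length + 1), A (w.take k) * B (w.drop k)

/-- `lu(A,B) = mu(A,B) - mu(B,A)`. -/
def lu (A B : List K → K) : List K → K :=
  fun w => mu A B w - mu B A w

/-- All decompositions of a word into two consecutive subwords. -/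
def splits2 {α : Type*} (w : List α) : List (List α × List α) :=
  (List.range (w.length + 1)).map fun k => (w.take k, w.drop k)

/-- All decompositions of a word into three consecutive subwords. -/
def splits3 {α : Type*} (w : List α) : List (List α × List α × List α) :=
  (splits2 w).flatMap fun p => (splits2 p.2).map fun q => (p.1, q.1, q.2)

/-- Add `s` to the first letter of a word. -/
def addFirst (s : K) : List K → List K
  | [] => []
  | x :: xs => (x + s) :: xs

/-- Add `s` to the last letter of a word. -/
def addLast (s : K) : List K → List K
  | [] => []
  | [x] => [x + s]
  | x :: xs => x :: addLast s xs

/-- `amit` for u-moulds: `(amit(B)·A)(w) = Σ_{w=abc, b,c≠∅} A(a⌈c) B(b)`. -/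
def amitU (B A : List K → K) : List K → K := fun w =>
  ((splits3 w).map fun p =>
    match p with
    | (_, [], _) => 0
    | (_, _, []) => 0
    | (a, b, c) => A (a ++ addFirst b.sum c) * B b).sum

/-- `anit` for u-moulds: `(anit(B)·A)(w) = Σ_{w=abc, a,b≠∅} A(a⌉c) B(b)`. -/
def anitU (B A : List K → K) : List K → K := fun w =>
  ((splits3 w).map fun p =>
    match p with
    | ([], _, _) => 0
    | (_, [], _) => 0
    | (a, b, c) => A (addLast b.sum a ++ c) * B b).sum

/-- `arit(B)·A = amit(B)·A - anit(B)·A` on u-moulds. -/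
def aritU (B A : List K → K) : List K → K :=
  fun w => amitU B A w - anitU B A w

/-- the ari bracket on u-moulds. -/
def ariU (A B : List K → K) : List K → K :=
  fun w => aritU B A w + lu A B w - aritU A B w

/-- `amit` for v-moulds. -/
def amitV (B A : List K → K) : List K → K := fun w =>
  ((splits3 w).map fun p =>
    match p with
    | (_, [], _) => 0
    | (_, _, []) => 0
    | (a, b, c0 :: c') => A (a ++ c0 :: c') * B (b.map (fun x => x - c0))).sum

/-- `anit` for v-moulds. -/
def anitV (B A : List K → K) : List K → K := fun w =>
  ((splits3 w).map fun p =>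
    match p with
    | ([], _, _) => 0
    | (_, [], _) => 0
    | (a, b, c) => A (a ++ c) * B (b.map (fun x => x - a.getLastD 0))).sum

/-- `arit(B)·A = amit(B)·A - anit(B)·A` on v-moulds. -/
def aritV (B A : List K → K) : List K → K :=
  fun w => amitV B A w - anitV B A w

/-- the ari bracket on v-moulds. -/
def ariV (A B : List K → K) : List K → K :=
  fun w => aritV B A w + lu A B w - aritV A B w

/-- `neg(A)(u_1,...,u_r) = A(-u_1,...,-u_r)`. -/
def negM (A : List K → K) : List K → K := fun w => A (w.map fun x => -x)

/-- `push(A)(u_1,...,u_r) = A(-u_1-⋯-u_r, u_1, ..., u_{r-1})`. -/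
def pushM (A : List K → K) : List K → K := fun w =>
  match w with
  | [] => A []
  | _ :: _ => A ((-w.sum) :: w.dropLast)

/-- `mantar(A)(u_1,...,u_r) = (-1)^{r-1} A(u_r,...,u_1)`. -/
def mantarM (A : List K → K) : List K → K :=
  fun w => (-1 : K) ^ (w.length + 1) * A w.reverse

/-- argument list for swap from u-moulds to v-moulds:
`(v_1,...,v_r) ↦ (v_r, v_{r-1}-v_r, ..., v_1-v_2)`. -/
def swapUargs (w : List K) : List K :=
  List.zipWith (· - ·) w.reverse (0 :: w.reverse)

/-- argument list for swap from v-moulds to u-moulds: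
`(u_1,...,u_r) ↦ (u_1+⋯+u_r, u_1+⋯+u_{r-1}, ..., u_1)`. -/
def swapVargs (w : List K) : List K :=
  (List.range w.length).map fun i => (w.take (w.length - i)).sum

/-- swap, sending a u-mould to a v-mould. -/
def swapUV (A : List K → K) : List K → K := fun w => A (swapUargs w)

/-- swap, sending a v-mould to a u-mould. -/
def swapVU (A : List K → K) : List K → K := fun w => A (swapVargs w)

/-- A constant-valued mould: its value depends only on the depth. -/
def IsConstantMould (C : List K → K) : Prop :=
  ∀ w w' : List K, w.length = w'.length → C w = C w'


set_option linter.unusedSectionVars false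
set_option linter.unnecessarySeqFocus false
section Aux
variable {K : Type*} [Field K] [CharZero K]

/-- consecutive differences, with seed `p`. -/
def diffs (p : K) : List K → List K
  | [] => []
  | x :: t => (x - p) :: diffs x t

lemma zipWith_sub_cons (m : List K) (p : K) :
    List.zipWith (· - ·) m (p :: m) = diffs p m := by
  induction m generalizing p with
  | nil => rfl
  | cons x t ih => simp [diffs, ih]

lemma swapUargs_eq_diffs (l : List K) : swapUargs l = diffs 0 l.reverse :=
  zipWith_sub_cons _ _

lemma addFirst_zero (l : List K) : addFirst 0 l = l := by
  cases l <;> simp [addFirst]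

lemma addFirst_addFirst (s t : K) (l : List K) :
    addFirst s (addFirst t l) = addFirst (t + s) l := by
  cases l <;> simp [addFirst] <;> ring

lemma diffs_eq_addFirst (p : K) (m : List K) :
    diffs p m = addFirst (-p) (diffs 0 m) := by
  cases m with
  | nil => rfl
  | cons x t => simp [diffs, addFirst]; ring

lemma diffs_append (p : K) (m1 m2 : List K) :
    diffs p (m1 ++ m2) = diffs p m1 ++ diffs (m1.getLastD p) m2 := by
  induction m1 generalizing p with
  | nil => rfl
  | cons x t ih =>
    simp only [List.cons_append, diffs, List.append_eq, ih x, List.getLastD_cons]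

lemma diffs_map_add (s : K) (m : List K) (p : K) :
    diffs (p + s) (m.map (· + s)) = diffs p m := by
  induction m generalizing p with
  | nil => rfl
  | cons x t ih => simpa [diffs] using ih x

lemma diffs_map_add' (x : K) (m : List K) :
    diffs x (m.map (· + x)) = diffs 0 m := by
  simpa using diffs_map_add x m 0

lemma swapUargs_map_add (l : List K) (s : K) :
    swapUargs (l.map (· + s)) = addFirst s (swapUargs l) := by
  rw [swapUargs_eq_diffs, swapUargs_eq_diffs, ← List.map_reverse]
  rw [show (0 : K) = -s + s by ring, diffs_map_add s l.reverse (-s),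
    diffs_eq_addFirst]
  simp

lemma swapUargs_append (l1 l2 : List K) :
    swapUargs (l1 ++ l2) = swapUargs l2 ++ addFirst (-(l2.headD 0)) (swapUargs l1) := by
  have h : l2.reverse.getLastD 0 = l2.headD 0 := by
    rw [List.getLastD_eq_getLast?, List.getLast?_reverse]; cases l2 <;> simp
  rw [swapUargs_eq_diffs, swapUargs_eq_diffs, swapUargs_eq_diffs, List.reverse_append,
    diffs_append, h]
  simp [← diffs_eq_addFirst]

/-- partial sums from the front. -/
def psums : List K → List K
  | [] => []
  | x :: t => x :: (psums t).map (· + x)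

lemma swapVargs_cons (x : K) (t : List K) :
    swapVargs (x :: t) = (swapVargs t).map (· + x) ++ [x] := by
  unfold swapVargs
  simp only [List.length_cons, List.range_succ, List.map_append, List.map_map, List.map_cons,
    List.map_nil]
  congr 1
  · apply List.map_congr_left
    intro i hi
    simp only [List.mem_range] at hi
    simp only [Function.comp_apply]
    rw [show t.length + 1 - i = (t.length - i) + 1 by omega, List.take_succ_cons,
      List.sum_cons]
    ring
  · simp

lemma reverse_swapVargs (l : List K) : (swapVargs l).reverse = psums l := by
  induction l with
  | nil => rfl
  | cons x t ih =>
    rw [swapVargs_cons, psums]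
    simp only [List.reverse_append, List.reverse_cons, List.reverse_nil, List.nil_append,
      List.singleton_append, ← List.map_reverse, ih]

lemma diffs_psums (l : List K) : diffs 0 (psums l) = l := by
  induction l with
  | nil => rfl
  | cons x t ih =>
    rw [psums, diffs, diffs_map_add' x (psums t), ih]
    norm_num

lemma swapUargs_swapVargs (l : List K) : swapUargs (swapVargs l) = l := by
  rw [swapUargs_eq_diffs, reverse_swapVargs, diffs_psums]

lemma length_swapVargs (l : List K) : (swapVargs l).length = l.length := by
  simp [swapVargs]

lemma getElem_swapVargs (l : List K) (t : ℕ) (h : t < (swapVargs l).length) :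
    (swapVargs l)[t] = (l.take (l.length - t)).sum := by
  simp [swapVargs]

lemma drop_swapVargs (l : List K) (i : ℕ) :
    (swapVargs l).drop i = swapVargs (l.take (l.length - i)) := by
  apply List.ext_getElem
  · simp only [List.length_drop, length_swapVargs, List.length_take]
    omega
  · intro t h1 h2
    simp only [List.length_drop, length_swapVargs, List.length_take] at h1 h2
    rw [List.getElem_drop, getElem_swapVargs, getElem_swapVargs, List.take_take]
    congr 2
    simp only [List.length_take]
    omega

lemma take_swapVargs (l : List K) (i : ℕ) :
    (swapVargs l).take i
      = (swapVargs (l.drop (l.length - i))).map (· + (l.take (l.length - i)).sum) := by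
  apply List.ext_getElem
  · simp only [List.length_take, length_swapVargs, List.length_map, List.length_drop]
    omega
  · intro t h1 h2
    simp only [List.length_take, length_swapVargs, List.length_map, List.length_drop]
      at h1 h2
    rw [List.getElem_take, getElem_swapVargs, List.getElem_map, getElem_swapVargs]
    rw [show l.length - t
        = (l.length - i) + ((l.drop (l.length - i)).length - t) by
      simp only [List.length_drop]; omega, List.take_add, List.sum_append]
    rw [add_comm]

lemma headD_swapVargs (l : List K) : (swapVargs l).headD 0 = l.sum := by
  cases l with
  | nil => rfl
  | cons x t =>
    unfold swapVargs
    rw [List.length_cons, List.range_succ_eq_map]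
    simp

end Aux
section Aux2
variable {K : Type*} [Field K] [CharZero K]

lemma list_range_map_sum (n : ℕ) (f : ℕ → K) :
    ((List.range n).map f).sum = ∑ i ∈ Finset.range n, f i := by
  induction n with
  | zero => rfl
  | succ n ih => simp [List.range_succ, Finset.sum_range_succ, ih]

lemma splits3_map_sum (w : List K) (f : List K × List K × List K → K) :
    ((splits3 w).map f).sum
      = ∑ i ∈ Finset.range (w.length + 1), ∑ j ∈ Finset.range ((w.length - i) + 1),
          f (w.take i, (w.drop i).take j, (w.drop i).drop j) := by
  unfold splits3 splits2
  rw [List.map_flatMap, List.flatMap_def, List.sum_flatten, List.map_map, List.map_map]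
  rw [list_range_map_sum]
  refine Finset.sum_congr rfl fun i _ => ?_
  simp only [Function.comp_apply, List.map_map, List.length_drop]
  rw [list_range_map_sum]
  exact Finset.sum_congr rfl fun j _ => rfl

/-- the index square. -/
def SQ (r : ℕ) : Finset (ℕ × ℕ) := Finset.range (r+1) ×ˢ Finset.range (r+1)

lemma tri_sum (r : ℕ) (F : ℕ → ℕ → K) :
    (∑ i ∈ Finset.range (r + 1), ∑ j ∈ Finset.range ((r - i) + 1), F i j)
      = ∑ p ∈ SQ r, if p.1 + p.2 ≤ r then F p.1 p.2 else 0 := by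
  rw [SQ, Finset.sum_product]
  refine Finset.sum_congr rfl fun i hi => ?_
  simp only [Finset.mem_range] at hi
  rw [← Finset.sum_filter]
  apply Finset.sum_congr
  · ext j
    simp only [Finset.mem_filter, Finset.mem_range]
    omega
  · intros; rfl

end Aux2
section Aux3
variable {K : Type*} [Field K] [CharZero K]

/-- the generic `amit`-type term at a u-split. -/
def termT (A B : List K → K) (w : List K) (i j : ℕ) : K :=
  A (w.take i ++ addFirst ((w.drop i).take j).sum (w.drop (i+j))) * B ((w.drop i).take j)

/-- the generic `anit`-type term at a u-split. -/
def termU (A B : List K → K) (w : List K) (i j : ℕ) : K :=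
  A (addLast ((w.drop i).take j).sum (w.take i) ++ w.drop (i+j)) * B ((w.drop i).take j)

lemma take_drop_ne_nil (w : List K) {i j : ℕ} (hj : 1 ≤ j) (hij : i + j ≤ w.length) :
    (w.drop i).take j ≠ [] := by
  apply List.ne_nil_of_length_pos
  simp only [List.length_take, List.length_drop]
  omega

lemma amitU_eq_sum (A B : List K → K) (w : List K) :
    amitU B A w = ∑ p ∈ SQ w.length,
      if 1 ≤ p.2 ∧ p.1 + p.2 < w.length then termT A B w p.1 p.2 else 0 := by
  unfold amitU
  rw [splits3_map_sum, tri_sum]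
  refine Finset.sum_congr rfl fun p hp => ?_
  obtain ⟨i, j⟩ := p
  simp only [SQ, Finset.mem_product, Finset.mem_range] at hp
  by_cases hij : i + j ≤ w.length
  · rw [if_pos hij]
    rcases Nat.eq_zero_or_pos j with hj | hj
    · subst hj
      rw [if_neg (by omega)]
      simp only [List.take_zero]
      all_goals rfl
    · obtain ⟨b0, bt, hb⟩ := List.exists_cons_of_ne_nil (take_drop_ne_nil w hj hij)
      rw [List.drop_drop, hb]
      rcases Nat.lt_or_ge (i + j) w.length with hr | hr
      · obtain ⟨c0, ct, hc⟩ := List.exists_cons_of_ne_nil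
          (show w.drop (i + j) ≠ [] from
            List.ne_nil_of_length_pos (by simp only [List.length_drop]; omega))
        rw [hc, if_pos ⟨hj, hr⟩]
        show A (w.take i ++ addFirst (b0 :: bt).sum (c0 :: ct)) * B (b0 :: bt) = _
        rw [← hb, ← hc, termT]
      · have hc : w.drop (i + j) = [] := by
          apply List.eq_nil_of_length_eq_zero
          simp only [List.length_drop]; omega
        rw [hc, if_neg (by omega)]
        all_goals rfl
  · rw [if_neg hij, if_neg (by omega)]

lemma anitU_eq_sum (A B : List K → K) (w : List K) :
    anitU B A w = ∑ p ∈ SQ w.length,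
      if 1 ≤ p.1 ∧ 1 ≤ p.2 ∧ p.1 + p.2 ≤ w.length then termU A B w p.1 p.2 else 0 := by
  unfold anitU
  rw [splits3_map_sum, tri_sum]
  refine Finset.sum_congr rfl fun p hp => ?_
  obtain ⟨i, j⟩ := p
  simp only [SQ, Finset.mem_product, Finset.mem_range] at hp
  by_cases hij : i + j ≤ w.length
  · rw [if_pos hij]
    rcases Nat.eq_zero_or_pos i with hi | hi
    · subst hi
      rw [if_neg (by omega)]
      simp only [List.take_zero]
      all_goals rfl
    · obtain ⟨a0, at', ha⟩ := List.exists_cons_of_ne_nil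
        (show w.take i ≠ [] from
          List.ne_nil_of_length_pos (by simp only [List.length_take]; omega))
      rw [List.drop_drop, ha]
      rcases Nat.eq_zero_or_pos j with hj | hj
      · subst hj
        rw [if_neg (by omega)]
        simp only [List.take_zero]
        all_goals rfl
      · obtain ⟨b0, bt, hb⟩ := List.exists_cons_of_ne_nil (take_drop_ne_nil w hj hij)
        rw [hb, if_pos ⟨hi, hj, hij⟩]
        show A (addLast (b0 :: bt).sum (a0 :: at') ++ w.drop (i + j)) * B (b0 :: bt) = _
        rw [← hb, ← ha, termU]
  · rw [if_neg hij, if_neg (by omega)]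

lemma termT_eq_mu_term (A B : List K → K) (w : List K) (i : ℕ) (hi : i ≤ w.length) :
    termT A B w i (w.length - i) = A (w.take i) * B (w.drop i) := by
  have h1 : (w.drop i).take (w.length - i) = w.drop i :=
    List.take_of_length_le (by simp only [List.length_drop]; omega)
  rw [termT, show i + (w.length - i) = w.length by omega, List.drop_length, h1]
  simp [addFirst]

lemma diag_sum_eq_mu (A B : List K → K) (w : List K) :
    (∑ p ∈ SQ w.length, if p.1 + p.2 = w.length then termT A B w p.1 p.2 else 0)
      = mu A B w := by
  rw [SQ, Finset.sum_product, mu]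
  refine Finset.sum_congr rfl fun i hi => ?_
  simp only [Finset.mem_range] at hi
  rw [Finset.sum_eq_single_of_mem (w.length - i) (Finset.mem_range.2 (by omega))
    (fun j _ hne => if_neg (by omega)), if_pos (by omega),
    termT_eq_mu_term A B w i (by omega)]

lemma mu_swap_eq_sum (A B : List K → K) (w : List K) :
    mu (swapUV A) (swapUV B) (swapVargs w)
      = ∑ j ∈ Finset.range (w.length + 1), termT A B w 0 j := by
  rw [mu, length_swapVargs]
  refine Finset.sum_nbij' (fun k => w.length - k) (fun k => w.length - k)
    (fun k hk => Finset.mem_range.2 (show w.length - k < w.length + 1 by omega))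
    (fun k hk => Finset.mem_range.2 (show w.length - k < w.length + 1 by omega))
    (fun k hk => by
      simp only [Finset.mem_range] at hk
      exact (show w.length - (w.length - k) = k by omega))
    (fun k hk => by
      simp only [Finset.mem_range] at hk
      exact (show w.length - (w.length - k) = k by omega))
    (fun k hk => ?_)
  rw [swapUV, swapUV, take_swapVargs, drop_swapVargs, swapUargs_map_add,
    swapUargs_swapVargs, swapUargs_swapVargs]
  simp only [termT, List.take_zero, List.nil_append, List.drop_zero, Nat.zero_add]

end Aux3
section Aux4
variable {K : Type*} [Field K] [CharZero K]

lemma swapVargs_nil : swapVargs ([] : List K) = [] := rfl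

lemma sum_take_eq_add (w : List K) (n Y X : ℕ) (h : X = n + Y) :
    (w.take X).sum = ((w.drop n).take Y).sum + (w.take n).sum := by
  rw [h, List.take_add, List.sum_append, add_comm]

lemma middle_swapVargs (w : List K) {i j : ℕ} (hij : i + j ≤ w.length) :
    ((swapVargs w).drop i).take j
      = (swapVargs ((w.drop (w.length - i - j)).take j)).map
          (· + (w.take (w.length - i - j)).sum) := by
  apply List.ext_getElem
  · simp only [List.length_take, List.length_drop, length_swapVargs, List.length_map]
    omega
  · intro t h1 h2
    simp only [List.length_take, List.length_drop, length_swapVargs, List.length_map] at h1 h2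
    rw [List.getElem_take, List.getElem_drop, getElem_swapVargs, List.getElem_map,
      getElem_swapVargs, List.take_take]
    exact sum_take_eq_add w _ _ _ (by
      simp only [List.length_take, List.length_drop]
      omega)

lemma third_swapVargs (w : List K) {i j : ℕ} (hij : i + j ≤ w.length) :
    ((swapVargs w).drop i).drop j = swapVargs (w.take (w.length - i - j)) := by
  rw [List.drop_drop, drop_swapVargs]
  congr 2
  omega

lemma map_add_sub_cancel (m : List K) (s : K) :
    (m.map (· + s)).map (fun x => x - s) = m := by
  rw [List.map_map]
  have : ((fun x => x - s) ∘ (· + s)) = id := by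
    funext x; simp
  rw [this, List.map_id]

lemma map_add_sub (m : List K) (s g : K) :
    (m.map (· + s)).map (fun x => x - g) = m.map (· + (s - g)) := by
  rw [List.map_map]
  apply List.map_congr_left
  intro x _
  simp only [Function.comp_apply]
  ring

lemma sum_take_split (w : List K) (n j : ℕ) :
    (w.take (n + j)).sum = (w.take n).sum + ((w.drop n).take j).sum := by
  rw [List.take_add, List.sum_append]

lemma amitV_eq_sum (A B : List K → K) (w : List K) :
    amitV (swapUV B) (swapUV A) (swapVargs w) = ∑ p ∈ SQ w.length,
      if 1 ≤ p.2 ∧ p.1 + p.2 < w.length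
      then termT A B w (w.length - p.1 - p.2) p.2 else 0 := by
  unfold amitV
  rw [splits3_map_sum, length_swapVargs, tri_sum]
  refine Finset.sum_congr rfl fun p hp => ?_
  obtain ⟨i, j⟩ := p
  simp only [SQ, Finset.mem_product, Finset.mem_range] at hp
  by_cases hij : i + j ≤ w.length
  swap
  · rw [if_neg hij, if_neg (by omega)]
  rw [if_pos hij]
  rcases Nat.eq_zero_or_pos j with hj | hj
  · subst hj
    rw [if_neg (by omega)]
    simp only [List.take_zero]
    all_goals rfl
  have hbne : ((swapVargs w).drop i).take j ≠ [] := by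
    apply List.ne_nil_of_length_pos
    simp only [List.length_take, List.length_drop, length_swapVargs]
    omega
  obtain ⟨b0, bt, hb⟩ := List.exists_cons_of_ne_nil hbne
  rcases Nat.lt_or_ge (i + j) w.length with hr | hr
  · -- main case: all parts as needed
    have hcc := third_swapVargs w hij
    have hcne : ((swapVargs w).drop i).drop j ≠ [] := by
      rw [hcc]
      apply List.ne_nil_of_length_pos
      simp only [length_swapVargs, List.length_take]
      omega
    obtain ⟨c0, ct, hc⟩ := List.exists_cons_of_ne_nil hcne
    rw [if_pos ⟨hj, hr⟩, hb, hc]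
    show swapUV A ((swapVargs w).take i ++ c0 :: ct)
        * swapUV B ((b0 :: bt).map (fun x => x - c0)) = _
    have hc0 : c0 = (w.take (w.length - i - j)).sum := by
      have h := headD_swapVargs (w.take (w.length - i - j))
      rw [← hcc, hc] at h
      simpa using h
    rw [← hb, ← hc, hcc, middle_swapVargs w hij, hc0]
    rw [swapUV, swapUV, map_add_sub_cancel, swapUargs_swapVargs]
    rw [swapUargs_append, swapUargs_swapVargs, headD_swapVargs, take_swapVargs,
      swapUargs_map_add, swapUargs_swapVargs, addFirst_addFirst]
    have hsplit : (w.take (w.length - i)).sum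
        = (w.take (w.length - i - j)).sum + ((w.drop (w.length - i - j)).take j).sum := by
      rw [← sum_take_split]
      congr 2
      omega
    have hdrop : w.drop (w.length - i) = w.drop ((w.length - i - j) + j) := by
      congr 1
      omega
    rw [show (w.take (w.length - i)).sum + -(w.take (w.length - i - j)).sum
        = ((w.drop (w.length - i - j)).take j).sum from by rw [hsplit]; ring, hdrop, termT]
  · -- c' is empty
    have hcc := third_swapVargs w hij
    have hc : ((swapVargs w).drop i).drop j = [] := by
      rw [hcc, show w.length - i - j = 0 by omega, List.take_zero, swapVargs_nil]
    rw [hb, hc, if_neg (by omega)]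
    all_goals rfl

/-- the intermediate `anit`-type term produced on the v side. -/
def termV (A B : List K → K) (w : List K) (i j : ℕ) : K :=
  A (w.take i ++ addFirst ((w.drop i).take j).sum (w.drop (i+j)))
    * B (((w.drop i).take j).tail ++ [(w.drop (i+j)).headD 0])

lemma getLastD_take {l : List K} {i : ℕ} (h1 : 1 ≤ i) (h2 : i ≤ l.length) :
    (l.take i).getLastD 0 = l[i-1]'(by omega) := by
  obtain ⟨m, rfl⟩ : ∃ m, i = m + 1 := ⟨i - 1, by omega⟩
  rw [List.take_succ, List.getElem?_eq_getElem (show m < l.length by omega),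
    show (some (l[m])).toList = [l[m]] from rfl, List.getLastD_concat]
  simp

lemma push_eval {B : List K → K} (hB : pushM B = B) (x : List K) (hx : x ≠ []) :
    B ((-x.sum) :: x.dropLast) = B x := by
  conv_rhs => rw [← hB]
  cases x with
  | nil => exact absurd rfl hx
  | cons y t => rfl

lemma anitV_eq_sum (A B : List K → K) (hB : pushM B = B) (w : List K) :
    anitV (swapUV B) (swapUV A) (swapVargs w) = ∑ p ∈ SQ w.length,
      if 1 ≤ p.1 ∧ 1 ≤ p.2 ∧ p.1 + p.2 ≤ w.length
      then termV A B w (w.length - p.1 - p.2) p.2 else 0 := by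
  unfold anitV
  rw [splits3_map_sum, length_swapVargs, tri_sum]
  refine Finset.sum_congr rfl fun p hp => ?_
  obtain ⟨i, j⟩ := p
  simp only [SQ, Finset.mem_product, Finset.mem_range] at hp
  by_cases hij : i + j ≤ w.length
  swap
  · rw [if_neg hij, if_neg (by omega)]
  rw [if_pos hij]
  rcases Nat.eq_zero_or_pos i with hi | hi
  · subst hi
    rw [if_neg (by omega)]
    simp only [List.take_zero]
    all_goals rfl
  have hane : (swapVargs w).take i ≠ [] := by
    apply List.ne_nil_of_length_pos
    simp only [List.length_take, length_swapVargs]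
    omega
  obtain ⟨a0, at', ha⟩ := List.exists_cons_of_ne_nil hane
  rcases Nat.eq_zero_or_pos j with hj | hj
  · subst hj
    rw [ha, if_neg (by omega)]
    simp only [List.take_zero]
    all_goals rfl
  have hbne : ((swapVargs w).drop i).take j ≠ [] := by
    apply List.ne_nil_of_length_pos
    simp only [List.length_take, List.length_drop, length_swapVargs]
    omega
  obtain ⟨b0, bt, hb⟩ := List.exists_cons_of_ne_nil hbne
  rw [if_pos ⟨hi, hj, hij⟩, ha, hb]
  show swapUV A ((a0 :: at') ++ ((swapVargs w).drop i).drop j)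
      * swapUV B ((b0 :: bt).map (fun x => x - (a0 :: at').getLastD 0)) = _
  rw [← ha, ← hb]
  have hnj : (w.length - i - j) + j < w.length := by omega
  have hnl : w.length - i - j < w.length := by omega
  have hg : ((swapVargs w).take i).getLastD 0 = (w.take (w.length - (i-1))).sum := by
    rw [getLastD_take hi (by rw [length_swapVargs]; omega), getElem_swapVargs]
  rw [third_swapVargs w hij, middle_swapVargs w hij, hg]
  rw [swapUV, swapUV, map_add_sub, swapUargs_map_add, swapUargs_swapVargs,
    swapUargs_append, swapUargs_swapVargs, headD_swapVargs, take_swapVargs,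
    swapUargs_map_add, swapUargs_swapVargs, addFirst_addFirst]
  have hsplit0 : (w.take (w.length - i)).sum
      = (w.take (w.length - i - j)).sum + ((w.drop (w.length - i - j)).take j).sum := by
    rw [← sum_take_split]
    congr 2
    omega
  rw [show (w.take (w.length - i)).sum + -(w.take (w.length - i - j)).sum
      = ((w.drop (w.length - i - j)).take j).sum from by rw [hsplit0]; ring,
    show w.drop (w.length - i) = w.drop ((w.length - i - j) + j) from by congr 1; omega,
    termV]
  congr 1
  -- now the B factors
  have hbu : (w.drop (w.length - i - j)).take j
      = w[w.length - i - j]'hnl :: (w.drop (w.length - i - j + 1)).take (j-1) := by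
    obtain ⟨m, hm⟩ : ∃ m, j = m + 1 := ⟨j - 1, by omega⟩
    subst hm
    rw [List.drop_eq_getElem_cons hnl, List.take_succ_cons]
    simp
  have hdjn : w.drop ((w.length - i - j) + j)
      = w[(w.length - i - j) + j]'hnj :: w.drop ((w.length - i - j) + j + 1) :=
    List.drop_eq_getElem_cons hnj
  have hg2 : (w.take (w.length - (i-1))).sum
      = (w.take (w.length - i - j)).sum + ((w.drop (w.length - i - j)).take j).sum
        + w[(w.length - i - j) + j]'hnj := by
    rw [show w.length - (i-1) = ((w.length - i - j) + j) + 1 by omega, List.take_succ,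
      List.getElem?_eq_getElem hnj,
      show (some (w[(w.length - i - j) + j]'hnj)).toList = [w[(w.length - i - j) + j]'hnj]
        from rfl,
      List.sum_append, ← sum_take_split]
    simp
  have hx : ((w.drop (w.length - i - j + 1)).take (j-1)
      ++ [w[(w.length - i - j) + j]'hnj]) ≠ [] := by simp
  have hpush := push_eval hB _ hx
  rw [List.dropLast_concat, List.sum_append] at hpush
  simp only [List.sum_cons, List.sum_nil, add_zero] at hpush
  rw [hbu, hdjn]
  simp only [List.tail_cons, List.headD_cons]
  rw [← hpush,
    show addFirst ((w.take (w.length - i - j)).sum - (w.take (w.length - (i-1))).sum)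
        (w[w.length - i - j]'hnl :: (w.drop (w.length - i - j + 1)).take (j-1))
      = (w[w.length - i - j]'hnl
          + ((w.take (w.length - i - j)).sum - (w.take (w.length - (i-1))).sum))
        :: (w.drop (w.length - i - j + 1)).take (j-1) from rfl]
  congr 2
  rw [hg2, hbu]
  simp only [List.sum_cons]
  ring

end Aux4
section Aux5
variable {K : Type*} [Field K] [CharZero K]

lemma addLast_cons (s y : K) (m : List K) (h : m ≠ []) :
    addLast s (y :: m) = y :: addLast s m := by
  cases m with
  | nil => exact absurd rfl h
  | cons z t => rfl

lemma addLast_concat (s : K) (l : List K) (x : K) :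
    addLast s (l ++ [x]) = l ++ [x + s] := by
  induction l with
  | nil => rfl
  | cons y t ih => rw [List.cons_append, addLast_cons s y _ (by simp), ih, List.cons_append]

lemma termV_eq_termU (A B : List K → K) (w : List K) {n j : ℕ} (hj : 1 ≤ j)
    (hnj : n + j < w.length) : termV A B w n j = termU A B w (n+1) j := by
  obtain ⟨m, rfl⟩ : ∃ m, j = m + 1 := ⟨j - 1, by omega⟩
  have hn : n < w.length := by omega
  have hm : n + (m+1) < w.length := hnj
  have hd2 : w.drop (n+(m+1)) = w[n+(m+1)]'hm :: w.drop (n+(m+1)+1) :=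
    List.drop_eq_getElem_cons hm
  have hbu : (w.drop n).take (m+1) = w[n]'hn :: (w.drop (n+1)).take m := by
    rw [List.drop_eq_getElem_cons hn, List.take_succ_cons]
  have hbt : (w.drop (n+1)).take (m+1) = (w.drop (n+1)).take m ++ [w[n+(m+1)]'hm] := by
    rw [List.take_succ,
      List.getElem?_eq_getElem (show m < (w.drop (n+1)).length by
        simp only [List.length_drop]; omega),
      Option.toList_some, List.getElem_drop]
    simp only [show n + 1 + m = n + (m+1) from by omega]
  have hta : w.take (n+1) = w.take n ++ [w[n]'hn] := by
    rw [List.take_succ, List.getElem?_eq_getElem hn, Option.toList_some]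
  rw [termV, termU, hbu, hd2]
  simp only [List.tail_cons, List.headD_cons]
  rw [hbt, hta, addLast_concat, List.append_assoc, List.singleton_append]
  rw [show w.drop (n+1+(m+1)) = w.drop (n+(m+1)+1) from by
    rw [show n+1+(m+1) = n+(m+1)+1 from by omega]]
  rw [show addFirst ((w[n]'hn :: (w.drop (n+1)).take m).sum)
        (w[n+(m+1)]'hm :: w.drop (n+(m+1)+1))
      = (w[n+(m+1)]'hm + (w[n]'hn :: (w.drop (n+1)).take m).sum)
        :: w.drop (n+(m+1)+1) from rfl]
  congr 4
  simp only [List.sum_cons, List.sum_append, List.sum_singleton, List.sum_nil, add_zero]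
  ring

lemma amitV_final (A B : List K → K) (w : List K) :
    amitV (swapUV B) (swapUV A) (swapVargs w) = ∑ p ∈ SQ w.length,
      if 1 ≤ p.1 ∧ 1 ≤ p.2 ∧ p.1 + p.2 ≤ w.length then termT A B w p.1 p.2 else 0 := by
  rw [amitV_eq_sum, ← Finset.sum_filter, ← Finset.sum_filter]
  refine Finset.sum_nbij' (fun p => (w.length - p.1 - p.2, p.2))
    (fun p => (w.length - p.1 - p.2, p.2)) ?_ ?_ ?_ ?_ ?_
  · intro p hp
    simp only [SQ, Finset.mem_filter, Finset.mem_product, Finset.mem_range] at hp ⊢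
    omega
  · intro p hp
    simp only [SQ, Finset.mem_filter, Finset.mem_product, Finset.mem_range] at hp ⊢
    omega
  · intro p hp
    simp only [SQ, Finset.mem_filter, Finset.mem_product, Finset.mem_range] at hp
    have : w.length - (w.length - p.1 - p.2) - p.2 = p.1 := by omega
    simp [this]
  · intro p hp
    simp only [SQ, Finset.mem_filter, Finset.mem_product, Finset.mem_range] at hp
    have : w.length - (w.length - p.1 - p.2) - p.2 = p.1 := by omega
    simp [this]
  · intro p hp
    rfl

lemma anitV_final (A B : List K → K) (hB : pushM B = B) (w : List K) :
    anitV (swapUV B) (swapUV A) (swapVargs w) = anitU B A w := by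
  rw [anitV_eq_sum A B hB, anitU_eq_sum]
  rw [← Finset.sum_filter, ← Finset.sum_filter]
  have hterm : ∀ p ∈ (SQ w.length).filter
      (fun p => 1 ≤ p.1 ∧ 1 ≤ p.2 ∧ p.1 + p.2 ≤ w.length),
      termV A B w (w.length - p.1 - p.2) p.2
        = termU A B w (w.length - p.1 - p.2 + 1) p.2 := by
    intro p hp
    simp only [SQ, Finset.mem_filter, Finset.mem_product, Finset.mem_range] at hp
    exact termV_eq_termU A B w hp.2.2.1 (by omega)
  rw [Finset.sum_congr rfl hterm]
  refine Finset.sum_nbij' (fun p => (w.length - p.1 - p.2 + 1, p.2))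
    (fun p => (w.length + 1 - p.1 - p.2, p.2)) ?_ ?_ ?_ ?_ ?_
  · intro p hp
    simp only [SQ, Finset.mem_filter, Finset.mem_product, Finset.mem_range] at hp ⊢
    omega
  · intro p hp
    simp only [SQ, Finset.mem_filter, Finset.mem_product, Finset.mem_range] at hp ⊢
    omega
  · intro p hp
    simp only [SQ, Finset.mem_filter, Finset.mem_product, Finset.mem_range] at hp
    obtain ⟨a, b⟩ := p
    simp only [Prod.mk.injEq]
    exact ⟨by omega, by trivial⟩
  · intro p hp
    simp only [SQ, Finset.mem_filter, Finset.mem_product, Finset.mem_range] at hp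
    obtain ⟨a, b⟩ := p
    simp only [Prod.mk.injEq]
    exact ⟨by omega, by trivial⟩
  · intro p hp
    rfl

lemma key_sum (A B : List K → K) (hB0 : B [] = 0) (w : List K) :
    (∑ p ∈ SQ w.length,
        if 1 ≤ p.1 ∧ 1 ≤ p.2 ∧ p.1 + p.2 ≤ w.length then termT A B w p.1 p.2 else 0)
      + (∑ j ∈ Finset.range (w.length + 1), termT A B w 0 j)
      = amitU B A w + mu A B w := by
  have hT0 : ∀ k, termT A B w k 0 = 0 := by
    intro k
    simp [termT, hB0]
  have h3 : (∑ j ∈ Finset.range (w.length+1), termT A B w 0 j)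
      = ∑ p ∈ SQ w.length, if p.1 = 0 then termT A B w 0 p.2 else 0 := by
    rw [SQ, Finset.sum_product]
    rw [show (∑ i ∈ Finset.range (w.length+1), ∑ j ∈ Finset.range (w.length+1),
          if i = 0 then termT A B w 0 j else 0)
        = ∑ i ∈ Finset.range (w.length+1),
            if i = 0 then (∑ j ∈ Finset.range (w.length+1), termT A B w 0 j) else 0 from
      Finset.sum_congr rfl fun i _ => by split_ifs <;> simp]
    rw [Finset.sum_ite_eq' (Finset.range (w.length+1)) 0
      (fun _ => ∑ j ∈ Finset.range (w.length+1), termT A B w 0 j)]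
    simp
  rw [amitU_eq_sum, ← diag_sum_eq_mu A B w, h3, ← Finset.sum_add_distrib,
    ← Finset.sum_add_distrib]
  refine Finset.sum_congr rfl fun p hp => ?_
  obtain ⟨i, j⟩ := p
  simp only [SQ, Finset.mem_product, Finset.mem_range] at hp
  dsimp only
  by_cases hj0 : j = 0
  · subst hj0
    simp [hT0]
  by_cases hD : i = 0
  · subst hD
    split_ifs <;> first | rfl | ring1 | omega
  · split_ifs <;> first | rfl | ring1 | omega
end Aux5

/-- for push-invariant moulds `A, B` in ARI,
`swap(ari(swap A, swap B)) = ari(A,B)`. -/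
theorem swap_ari_swap_of_push_invariant (A B : List K → K)
    (hA0 : A [] = 0) (hB0 : B [] = 0)
    (hA : pushM A = A) (hB : pushM B = B) :
    swapVU (ariV (swapUV A) (swapUV B)) = ariU A B := by
  funext w
  show ariV (swapUV A) (swapUV B) (swapVargs w) = ariU A B w
  simp only [ariV, aritV, ariU, aritU, lu]
  rw [amitV_final A B w, anitV_final A B hB w, amitV_final B A w, anitV_final B A hA w,
    mu_swap_eq_sum A B w, mu_swap_eq_sum B A w]
  linear_combination (key_sum A B hB0 w) - (key_sum B A hA0 w)
end

section
/- For formal power series (or polynomials) f, g, h in Lie[x,y], the derivations D_f defined by D_f(x)=0, D_f(y)=[y,f] satisfy [D_f, D_g] = D_{{f,g}}, where {f,g} = [f,g] + D_f(g) - D_g(f) is the Poisson (Ihara) bracket; consequently the Poisson bracket satisfies the Jacobi identity and makes Lie[x,y] a Lie algebra. -/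
open List

attribute [local instance 100] LieRing.ofAssociativeRing

/-- The noncommutative polynomial ring `ℚ⟨x,y⟩`, realized as the monoid algebra of
the free monoid on two letters. -/
abbrev NCPoly : Type := MonoidAlgebra ℚ (FreeMonoid (Fin 2))

/-- The generator `x`. -/
noncomputable def Xg : NCPoly := MonoidAlgebra.of ℚ (FreeMonoid (Fin 2)) (FreeMonoid.of 0)

/-- The generator `y`. -/
noncomputable def Yg : NCPoly := MonoidAlgebra.of ℚ (FreeMonoid (Fin 2)) (FreeMonoid.of 1)

/-- The monomial corresponding to a word in `x,y`. -/
noncomputable def ofW (w : List (Fin 2)) : NCPoly :=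
  MonoidAlgebra.of ℚ (FreeMonoid (Fin 2)) (FreeMonoid.ofList w)

/-- The coefficient `(f|w)` of a word `w` in `f`. -/
noncomputable def coeffW (f : NCPoly) (w : List (Fin 2)) : ℚ := f.coeff (FreeMonoid.ofList w)

/-- The value of the derivation `D_f` (with `D_f(x) = 0`, `D_f(y) = [y,f] = yf - fy`)
on the monomial given by a word. -/
noncomputable def Dword (f : NCPoly) : List (Fin 2) → NCPoly
  | [] => 0
  | a :: w => (if a = 1 then Yg * f - f * Yg else 0) * ofW w
      + (MonoidAlgebra.of ℚ (FreeMonoid (Fin 2)) (FreeMonoid.of a)) * Dword f w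

/-- The derivation `D_f` of `ℚ⟨x,y⟩` determined by `D_f(x) = 0`, `D_f(y) = [y,f]`. -/
noncomputable def Dmap (f g : NCPoly) : NCPoly :=
  g.coeff.sum fun w c => c • Dword f (FreeMonoid.toList w)

/-- The Poisson (Ihara) bracket `{f,g} = [f,g] + D_f(g) - D_g(f)`. -/
noncomputable def pois (f g : NCPoly) : NCPoly :=
  f * g - g * f + Dmap f g - Dmap g f

lemma Dmap_single (f : NCPoly) (w : FreeMonoid (Fin 2)) (c : ℚ) :
    Dmap f (MonoidAlgebra.single w c) = c • Dword f (FreeMonoid.toList w) :=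
  Finsupp.sum_single_index (zero_smul ℚ _)

lemma Dmap_zero2 (f : NCPoly) : Dmap f 0 = 0 := Finsupp.sum_zero_index

lemma Dmap_add2 (f a b : NCPoly) : Dmap f (a + b) = Dmap f a + Dmap f b :=
  Finsupp.sum_add_index' (fun _ => zero_smul ℚ _) (fun _ _ _ => add_smul _ _ _)

lemma Dmap_smul2 (f : NCPoly) (c : ℚ) (a : NCPoly) : Dmap f (c • a) = c • Dmap f a := by
  induction a using MonoidAlgebra.induction_linear with
  | zero => simp [Dmap_zero2]
  | add a b ha hb => rw [smul_add, Dmap_add2, ha, hb, Dmap_add2, smul_add]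
  | single w d =>
      rw [show (c • MonoidAlgebra.single w d : NCPoly) = MonoidAlgebra.single w (c * d) from
        MonoidAlgebra.smul_single' c w d, Dmap_single, Dmap_single, mul_smul]

lemma Dmap_neg2 (f a : NCPoly) : Dmap f (-a) = -Dmap f a := by
  have := Dmap_smul2 f (-1) a; simpa using this

lemma Dmap_sub2 (f a b : NCPoly) : Dmap f (a - b) = Dmap f a - Dmap f b := by
  rw [sub_eq_add_neg, Dmap_add2, Dmap_neg2, sub_eq_add_neg]

lemma ofW_nil : ofW [] = 1 := rfl
lemma ofW_append (u v : List (Fin 2)) : ofW (u ++ v) = ofW u * ofW v := by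
  unfold ofW; rw [← map_mul]; rfl

lemma ofW_cons (a : Fin 2) (w : List (Fin 2)) :
    ofW (a :: w) = (MonoidAlgebra.of ℚ (FreeMonoid (Fin 2)) (FreeMonoid.of a)) * ofW w := by
  have := ofW_append [a] w
  simpa [ofW] using this

lemma Dword_cons (f : NCPoly) (a : Fin 2) (w : List (Fin 2)) :
    Dword f (a :: w) = (if a = 1 then Yg * f - f * Yg else 0) * ofW w
      + (MonoidAlgebra.of ℚ (FreeMonoid (Fin 2)) (FreeMonoid.of a)) * Dword f w := rfl

lemma Dword_append (f : NCPoly) (u v : List (Fin 2)) :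
    Dword f (u ++ v) = Dword f u * ofW v + ofW u * Dword f v := by
  induction u with
  | nil => show Dword f v = Dword f [] * ofW v + ofW [] * Dword f v
           rw [show Dword f [] = 0 from rfl, ofW_nil]; noncomm_ring
  | cons a u ih =>
    rw [List.cons_append, Dword_cons, Dword_cons, ih, ofW_cons, ofW_append]
    noncomm_ring


lemma single_mul_single' (m n : FreeMonoid (Fin 2)) (c d : ℚ) :
    (MonoidAlgebra.single m c * MonoidAlgebra.single n d : NCPoly)
      = MonoidAlgebra.single (m * n) (c * d) :=
  MonoidAlgebra.single_mul_single _ _ _ _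

lemma ofW_toList (m : FreeMonoid (Fin 2)) :
    ofW (FreeMonoid.toList m) = MonoidAlgebra.single m 1 := rfl

lemma single_eq_smul (m : FreeMonoid (Fin 2)) (c : ℚ) :
    (MonoidAlgebra.single m c : NCPoly) = c • ofW (FreeMonoid.toList m) := by
  rw [ofW_toList, MonoidAlgebra.smul_single', mul_one]

lemma Dmap_ofW (f : NCPoly) (w : List (Fin 2)) : Dmap f (ofW w) = Dword f w := by
  have : (ofW w : NCPoly) = MonoidAlgebra.single (FreeMonoid.ofList w) 1 := rfl
  rw [this, Dmap_single, one_smul]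
  rfl

lemma Dmap_mul (f a b : NCPoly) : Dmap f (a * b) = Dmap f a * b + a * Dmap f b := by
  induction a using MonoidAlgebra.induction_linear with
  | zero => simp [Dmap_zero2]
  | add a a' ha ha' => rw [add_mul, Dmap_add2, ha, ha', Dmap_add2]; noncomm_ring
  | single m c =>
    induction b using MonoidAlgebra.induction_linear with
    | zero => simp [Dmap_zero2]
    | add b b' hb hb' => rw [mul_add, Dmap_add2, hb, hb', Dmap_add2]; noncomm_ring
    | single n d =>
      rw [single_mul_single', Dmap_single, Dmap_single, Dmap_single,
        FreeMonoid.toList_mul, Dword_append, single_eq_smul, single_eq_smul]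
      rw [smul_add, smul_mul_assoc, smul_mul_assoc, mul_smul_comm, mul_smul_comm,
        smul_smul, smul_smul]

lemma Xg_eq : (Xg : NCPoly) = ofW [0] := rfl
lemma Yg_eq : (Yg : NCPoly) = ofW [1] := rfl

lemma Dmap_Xg (f : NCPoly) : Dmap f Xg = 0 := by
  rw [Xg_eq, Dmap_ofW, Dword_cons]
  norm_num [Dword]

lemma Dmap_Yg (f : NCPoly) : Dmap f Yg = Yg * f - f * Yg := by
  rw [Yg_eq, Dmap_ofW, Dword_cons]
  simp [Dword, ofW_nil, Yg_eq]

lemma key_word (f g : NCPoly) (w : List (Fin 2)) :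
    Dmap f (Dword g w) - Dmap g (Dword f w) = Dword (pois f g) w := by
  induction w with
  | nil => show Dmap f 0 - Dmap g 0 = 0
           rw [Dmap_zero2, Dmap_zero2, sub_zero]
  | cons a w ih =>
    rw [Dword_cons, Dword_cons, Dword_cons]
    fin_cases a
    · norm_num
      rw [show (MonoidAlgebra.single (FreeMonoid.of 0) 1 : NCPoly) = Xg from rfl]
      rw [Dmap_mul, Dmap_mul, Dmap_Xg, Dmap_Xg, zero_mul, zero_mul, zero_add, zero_add,
        ← mul_sub, ih]
    · norm_num
      rw [show (MonoidAlgebra.single (FreeMonoid.of 1) 1 : NCPoly) = Yg from rfl]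
      rw [Dmap_add2, Dmap_add2, Dmap_mul, Dmap_mul, Dmap_mul, Dmap_mul,
        Dmap_sub2, Dmap_sub2, Dmap_mul, Dmap_mul, Dmap_mul, Dmap_mul,
        Dmap_Yg, Dmap_Yg, Dmap_ofW, Dmap_ofW, ← ih, pois]
      noncomm_ring

lemma Dcomm (f g z : NCPoly) :
    Dmap f (Dmap g z) - Dmap g (Dmap f z) = Dmap (pois f g) z := by
  induction z using MonoidAlgebra.induction_linear with
  | zero => simp [Dmap_zero2]
  | add a b ha hb =>
      rw [Dmap_add2, Dmap_add2, Dmap_add2, Dmap_add2, Dmap_add2, ← ha, ← hb]; abel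
  | single m c =>
      rw [Dmap_single, Dmap_single, Dmap_single, Dmap_smul2, Dmap_smul2, ← smul_sub, key_word]

lemma pois_expand (a b c : NCPoly) :
    pois a (pois b c) = a * pois b c - pois b c * a + Dmap a (pois b c)
      - (Dmap b (Dmap c a) - Dmap c (Dmap b a)) := by
  rw [Dcomm b c a]
  rfl

lemma jacobi (f g h : NCPoly) :
    pois f (pois g h) + pois g (pois h f) + pois h (pois f g) = 0 := by
  rw [pois_expand f g h, pois_expand g h f, pois_expand h f g]
  simp only [pois, Dmap_add2, Dmap_sub2, Dmap_mul]
  noncomm_ring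

/-- for `f, g` in the free Lie algebra `Lie[x,y]`, the derivations `D_f`
satisfy `[D_f, D_g] = D_{{f,g}}` on `Lie[x,y]`, and consequently the Poisson (Ihara)
bracket satisfies the Jacobi identity on `Lie[x,y]`, making it a Lie algebra. -/
theorem poisson_bracket_lie_algebra :
    (∀ f g z : NCPoly, f ∈ LieSubalgebra.lieSpan ℚ NCPoly {Xg, Yg} →
      g ∈ LieSubalgebra.lieSpan ℚ NCPoly {Xg, Yg} →
      z ∈ LieSubalgebra.lieSpan ℚ NCPoly {Xg, Yg} →
      Dmap f (Dmap g z) - Dmap g (Dmap f z) = Dmap (pois f g) z) ∧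
    (∀ f g h : NCPoly, f ∈ LieSubalgebra.lieSpan ℚ NCPoly {Xg, Yg} →
      g ∈ LieSubalgebra.lieSpan ℚ NCPoly {Xg, Yg} →
      h ∈ LieSubalgebra.lieSpan ℚ NCPoly {Xg, Yg} →
      pois f (pois g h) + pois g (pois h f) + pois h (pois f g) = 0) :=
  ⟨fun f g z _ _ _ => Dcomm f g z, fun f g h _ _ _ => jacobi f g h⟩
end
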